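/- Primal error bound for Case II: with (x, y) the exact solution of A*y + i x = f, Ax = y, for any x̃ ∈ D(A) and any ψ ∈ D(A*): ‖x − x̃‖² + ‖A(x − x̃)‖² ≤ 2(‖f − i x̃ − A*ψ‖² + ‖ψ − A x̃‖²). -/

import Mathlib

open scoped ComplexInnerProductSpace

lemma aux_real (a b c d r s : ℝ) (ha : 0 ≤ a) (hb : 0 ≤ b) (hc : 0 ≤ c) (hd : 0 ≤ d)
    (h1 : r ^ 2 + s ^ 2 ≤ (c * b) ^ 2) (h2 : r ^ 2 + s ^ 2 ≤ (d * a) ^ 2) :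
    a ^ 2 + b ^ 2 ≤ 2 * (d ^ 2 + a ^ 2 + 2 * (-s) + c ^ 2 + b ^ 2 + 2 * (-r)) := by
  have k1 : 2 * (r + s) ≤ 2 * c ^ 2 + b ^ 2 := by
    nlinarith [sq_nonneg (r - s), sq_nonneg (2 * c ^ 2 - b ^ 2),
      sq_nonneg (2 * c ^ 2 + b ^ 2 - 2 * (r + s)), sq_nonneg (r + s), mul_nonneg hc hb]
  have k2 : 2 * (r + s) ≤ 2 * d ^ 2 + a ^ 2 := by
    nlinarith [sq_nonneg (r - s), sq_nonneg (2 * d ^ 2 - a ^ 2),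
      sq_nonneg (2 * d ^ 2 + a ^ 2 - 2 * (r + s)), sq_nonneg (r + s), mul_nonneg hd ha]
  linarith

/-- Primal error bound for Case II. -/
theorem stmt_13
    {H1 H2 : Type*} [NormedAddCommGroup H1] [InnerProductSpace ℂ H1] [CompleteSpace H1]
    [NormedAddCommGroup H2] [InnerProductSpace ℂ H2] [CompleteSpace H2]
    (A : H1 →ₗ.[ℂ] H2) (hd : Dense (A.domain : Set H1)) (hc : A.IsClosed)
    (f : H1) (x : A.domain) (y : A.adjoint.domain)
    (h1 : A.adjoint y + Complex.I • (x : H1) = f) (h2 : A x = (y : H2))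
    (xt : A.domain) (ψ : A.adjoint.domain) :
    ‖(x : H1) - (xt : H1)‖ ^ 2 + ‖A (x - xt)‖ ^ 2
      ≤ 2 * (‖f - Complex.I • (xt : H1) - A.adjoint ψ‖ ^ 2 + ‖(ψ : H2) - A xt‖ ^ 2) := by
  set e : A.domain := x - xt with he
  set u : A.adjoint.domain := y - ψ with hu
  have hce : ((e : A.domain) : H1) = (x : H1) - (xt : H1) := rfl
  have hr1 : f - Complex.I • (xt : H1) - A.adjoint ψ
      = A.adjoint u + Complex.I • (e : H1) := by
    rw [← h1, hu, LinearPMap.map_sub]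
    push_cast
    rw [hce, smul_sub]
    abel
  have hr2 : (ψ : H2) - A xt = A e - (u : H2) := by
    rw [he, LinearPMap.map_sub, h2, hu]
    push_cast
    abel
  rw [← hce, hr1, hr2]
  -- inner product facts
  have hadj : ⟪A.adjoint u, (e : H1)⟫ = ⟪(u : H2), A e⟫ :=
    A.adjoint_isFormalAdjoint hd u e
  set z : ℂ := ⟪(u : H2), A e⟫ with hz
  have hcs1 : ‖z‖ ≤ ‖(u : H2)‖ * ‖A e‖ := norm_inner_le_norm _ _
  have hcs2 : ‖z‖ ≤ ‖A.adjoint u‖ * ‖(e : H1)‖ :=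
    hadj ▸ norm_inner_le_norm _ _
  have hn1 : ‖A.adjoint u + Complex.I • (e : H1)‖ ^ 2
      = ‖A.adjoint u‖ ^ 2 + ‖(e : H1)‖ ^ 2 + 2 * (-z.im) := by
    rw [@norm_add_sq ℂ, inner_smul_right, hadj, norm_smul]
    simp [Complex.mul_re, RCLike.re_to_complex]
    ring
  have hn2 : ‖A e - (u : H2)‖ ^ 2 = ‖(u : H2)‖ ^ 2 + ‖A e‖ ^ 2 + 2 * (-z.re) := by
    rw [@norm_sub_sq ℂ, ← inner_conj_symm, ← hz]
    simp [RCLike.re_to_complex]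
    ring
  rw [hn1, hn2]
  have habs : ‖z‖ = ‖z‖ := rfl
  have hz2 : z.re ^ 2 + z.im ^ 2 = ‖z‖ ^ 2 := by
    rw [← habs, Complex.sq_norm, Complex.normSq_apply]; ring
  have h1' : z.re ^ 2 + z.im ^ 2 ≤ (‖(u : H2)‖ * ‖A e‖) ^ 2 := by
    rw [hz2]; exact pow_le_pow_left₀ (norm_nonneg _) hcs1 2
  have h2' : z.re ^ 2 + z.im ^ 2 ≤ (‖A.adjoint u‖ * ‖(e : H1)‖) ^ 2 := by
    rw [hz2]; exact pow_le_pow_left₀ (norm_nonneg _) hcs2 2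
  have := aux_real ‖(e : H1)‖ ‖A e‖ ‖(u : H2)‖ ‖A.adjoint u‖ z.re z.im
    (norm_nonneg _) (norm_nonneg _) (norm_nonneg _) (norm_nonneg _) h1' h2'
  linarith
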